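/- Let Γ be a finite simple graph each of whose edges is colored red, green, or blue, with R red edges, G green edges, and B blue edges, and suppose the number of rainbow triangles of Γ equals √(2·R·G·B) and is positive. Then there exists an integer d ≥ 1 such that for every permutation (c1,c2,c3) of the three colors and every pair of vertices u, v inducing an edge of color c1, there are exactly d vertices w such that uw is an edge of color c2 and vw is an edge of color c3. -/

import Mathlib

open scoped Classical

noncomputable section

namespace RainbowTri

variable {V : Type*} [Fintype V]

/-- The finset of edges of `Γ` having color `c` (red = 0, green = 1, blue = 2). -/
def colorEdges (Γ : SimpleGraph V) (col : Sym2 V → Fin 3) (c : Fin 3) : Finset (Sym2 V) :=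
  Finset.univ.filter (fun e => e ∈ Γ.edgeSet ∧ col e = c)

/-- The finset of rainbow triangles: 3-sets of pairwise adjacent vertices whose three
edges receive three distinct colors. -/
def rainbowTriangles (Γ : SimpleGraph V) (col : Sym2 V → Fin 3) : Finset (Finset V) :=
  Finset.univ.filter (fun s => ∃ a b c : V, s = {a, b, c} ∧
    Γ.Adj a b ∧ Γ.Adj a c ∧ Γ.Adj b c ∧
    col s(a, b) ≠ col s(a, c) ∧ col s(a, b) ≠ col s(b, c) ∧ col s(a, c) ≠ col s(b, c))

/-- The finset of properly 3-edge-colored copies of `K₄`: 4-sets of pairwise adjacent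
vertices on which each color appears on exactly two (disjoint) of the six edges. -/
def properK4s (Γ : SimpleGraph V) (col : Sym2 V → Fin 3) : Finset (Finset V) :=
  Finset.univ.filter (fun s => ∃ a b c d : V, s = {a, b, c, d} ∧
    Γ.Adj a b ∧ Γ.Adj a c ∧ Γ.Adj a d ∧ Γ.Adj b c ∧ Γ.Adj b d ∧ Γ.Adj c d ∧
    col s(a, b) = col s(c, d) ∧ col s(a, c) = col s(b, d) ∧ col s(a, d) = col s(b, c) ∧
    col s(a, b) ≠ col s(a, c) ∧ col s(a, b) ≠ col s(a, d) ∧ col s(a, c) ≠ col s(a, d))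

/-- The color pattern of a proper 3-edge-coloring of `K₄` on vertex set `Fin 4`:
opposite edges get the same color ({0,1},{2,3} ↦ 0; {0,2},{1,3} ↦ 1; {0,3},{1,2} ↦ 2). -/
def pairColor (i j : Fin 4) : Fin 3 :=
  ⟨((i.val ^^^ j.val) - 1) % 3, Nat.mod_lt _ (by norm_num)⟩

/-- `Γ` (with edge coloring `col`) is obtained from a blowup of a properly
3-edge-colored `K₄` by possibly adding a set of isolated vertices: vertices mapped to
`none` are isolated, vertices are adjacent iff they lie in distinct parts, and colors
between parts follow the proper `K₄`-pattern up to a permutation `σ` of the colors. -/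
def IsBlowupK4PlusIsolated (Γ : SimpleGraph V) (col : Sym2 V → Fin 3) : Prop :=
  ∃ (P : V → Option (Fin 4)) (σ : Equiv.Perm (Fin 3)),
    (∀ u v : V, Γ.Adj u v ↔ ∃ i j : Fin 4, i ≠ j ∧ P u = some i ∧ P v = some j) ∧
    (∀ (u v : V) (i j : Fin 4), P u = some i → P v = some j → Γ.Adj u v →
      col s(u, v) = σ (pairColor i j))

/-- As `IsBlowupK4PlusIsolated`, where moreover the four parts have equal size. -/
def IsBalancedBlowupK4PlusIsolated (Γ : SimpleGraph V) (col : Sym2 V → Fin 3) : Prop :=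
  ∃ (P : V → Option (Fin 4)) (σ : Equiv.Perm (Fin 3)),
    (∀ u v : V, Γ.Adj u v ↔ ∃ i j : Fin 4, i ≠ j ∧ P u = some i ∧ P v = some j) ∧
    (∀ (u v : V) (i j : Fin 4), P u = some i → P v = some j → Γ.Adj u v →
      col s(u, v) = σ (pairColor i j)) ∧
    (∀ i j : Fin 4, (Finset.univ.filter (fun v => P v = some i)).card
      = (Finset.univ.filter (fun v => P v = some j)).card)

/-- `Γ` (with edge coloring `col`) is a balanced blowup of a properly 3-edge-colored
`K₄` (no extra isolated vertices). -/
def IsBalancedBlowupK4 (Γ : SimpleGraph V) (col : Sym2 V → Fin 3) : Prop :=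
  ∃ (P : V → Fin 4) (σ : Equiv.Perm (Fin 3)),
    (∀ u v : V, Γ.Adj u v ↔ P u ≠ P v) ∧
    (∀ u v : V, Γ.Adj u v → col s(u, v) = σ (pairColor (P u) (P v))) ∧
    (∀ i j : Fin 4, (Finset.univ.filter (fun v => P v = i)).card
      = (Finset.univ.filter (fun v => P v = j)).card)

/-- `d⁺(u,v)`: the number of vertices `w` with `uw` blue and `vw` green. -/
def dPlus (Γ : SimpleGraph V) (col : Sym2 V → Fin 3) (u v : V) : ℕ :=
  (Finset.univ.filter (fun w => Γ.Adj u w ∧ col s(u, w) = 2 ∧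
    Γ.Adj v w ∧ col s(v, w) = 1)).card

/-- `d⁻(u,v)`: the number of vertices `w` with `uw` green and `vw` blue. -/
def dMinus (Γ : SimpleGraph V) (col : Sym2 V → Fin 3) (u v : V) : ℕ :=
  (Finset.univ.filter (fun w => Γ.Adj u w ∧ col s(u, w) = 1 ∧
    Γ.Adj v w ∧ col s(v, w) = 2)).card

/-- `d_K(u,v)`: the number of ordered pairs `(w,x)` with `wx` red, `uw`, `vx` green
and `ux`, `vw` blue. -/
def dK (Γ : SimpleGraph V) (col : Sym2 V → Fin 3) (u v : V) : ℕ :=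
  (Finset.univ.filter (fun p : V × V => Γ.Adj p.1 p.2 ∧ col s(p.1, p.2) = 0 ∧
    Γ.Adj u p.1 ∧ col s(u, p.1) = 1 ∧ Γ.Adj v p.2 ∧ col s(v, p.2) = 1 ∧
    Γ.Adj u p.2 ∧ col s(u, p.2) = 2 ∧ Γ.Adj v p.1 ∧ col s(v, p.1) = 2)).card

/-- Ordered pairs of vertices inducing a red edge. -/
def redPairs (Γ : SimpleGraph V) (col : Sym2 V → Fin 3) : Finset (V × V) :=
  Finset.univ.filter (fun p => Γ.Adj p.1 p.2 ∧ col s(p.1, p.2) = 0)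

/-- The set `S` of ordered tuples `(u,v,x,y)` with `uv` red, `ux`, `uy` blue and
`vx`, `vy` green (`x = y` allowed). -/
def tupleSet (Γ : SimpleGraph V) (col : Sym2 V → Fin 3) : Finset (V × V × V × V) :=
  Finset.univ.filter (fun t => Γ.Adj t.1 t.2.1 ∧ col s(t.1, t.2.1) = 0 ∧
    Γ.Adj t.1 t.2.2.1 ∧ col s(t.1, t.2.2.1) = 2 ∧
    Γ.Adj t.1 t.2.2.2 ∧ col s(t.1, t.2.2.2) = 2 ∧
    Γ.Adj t.2.1 t.2.2.1 ∧ col s(t.2.1, t.2.2.1) = 1 ∧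
    Γ.Adj t.2.1 t.2.2.2 ∧ col s(t.2.1, t.2.2.2) = 1)


section Aux

open Finset

/-! ### Generic algebraic helpers -/

lemma sq_sum_key {α : Type*} (s : Finset α) (f : α → ℤ) :
    2 * ((s.card : ℤ) * ∑ x ∈ s, f x ^ 2 - (∑ x ∈ s, f x) ^ 2)
      = ∑ p ∈ s, ∑ q ∈ s, (f p - f q) ^ 2 := by
  have h1 : ∀ p : α, ∑ q ∈ s, (f p - f q) ^ 2
      = (s.card : ℤ) * f p ^ 2 - 2 * f p * (∑ q ∈ s, f q) + ∑ q ∈ s, f q ^ 2 := by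
    intro p
    calc ∑ q ∈ s, (f p - f q) ^ 2
        = ∑ q ∈ s, (f p ^ 2 - 2 * f p * f q + f q ^ 2) := by
          exact Finset.sum_congr rfl (fun q _ => by ring)
      _ = (∑ _q ∈ s, f p ^ 2) - (∑ q ∈ s, 2 * f p * f q) + ∑ q ∈ s, f q ^ 2 := by
          rw [Finset.sum_add_distrib, Finset.sum_sub_distrib]
      _ = (s.card : ℤ) * f p ^ 2 - 2 * f p * (∑ q ∈ s, f q) + ∑ q ∈ s, f q ^ 2 := by
          rw [Finset.sum_const, nsmul_eq_mul, Finset.mul_sum]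
  rw [Finset.sum_congr rfl (fun p (_ : p ∈ s) => h1 p), Finset.sum_add_distrib,
    Finset.sum_sub_distrib, ← Finset.mul_sum, ← Finset.sum_mul, Finset.sum_const,
    nsmul_eq_mul, ← Finset.mul_sum]
  ring

lemma const_of_sq_sum_eq {α : Type*} (s : Finset α) (f : α → ℤ)
    (h : (∑ x ∈ s, f x) ^ 2 = (s.card : ℤ) * ∑ x ∈ s, f x ^ 2) :
    ∀ p ∈ s, ∀ q ∈ s, f p = f q := by
  have h0 : ∑ p ∈ s, ∑ q ∈ s, (f p - f q) ^ 2 = 0 := by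
    rw [← sq_sum_key s f, h]; ring
  intro p hp q hq
  have h1 := (Finset.sum_eq_zero_iff_of_nonneg
    (fun i _ => Finset.sum_nonneg (fun j _ => sq_nonneg _))).mp h0 p hp
  have h2 := (Finset.sum_eq_zero_iff_of_nonneg (fun j _ => sq_nonneg _)).mp h1 q hq
  have := sq_eq_zero_iff.mp h2
  linarith

lemma cs_int {α : Type*} (s : Finset α) (f : α → ℤ) :
    (∑ x ∈ s, f x) ^ 2 ≤ (s.card : ℤ) * ∑ x ∈ s, f x ^ 2 := by
  have h := sq_sum_key s f
  have h0 : 0 ≤ ∑ p ∈ s, ∑ q ∈ s, (f p - f q) ^ 2 :=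
    Finset.sum_nonneg (fun i _ => Finset.sum_nonneg (fun j _ => sq_nonneg _))
  nlinarith [h]

lemma cs_nat {α : Type*} (s : Finset α) (f : α → ℕ) :
    (∑ x ∈ s, f x) ^ 2 ≤ s.card * ∑ x ∈ s, f x ^ 2 := by
  have h := cs_int s (fun x => (f x : ℤ))
  have h1 : ((∑ x ∈ s, f x) ^ 2 : ℤ) ≤ ((s.card * ∑ x ∈ s, f x ^ 2 : ℕ) : ℤ) := by
    push_cast
    exact h
  exact_mod_cast h1

lemma const_nat {α : Type*} (s : Finset α) (f : α → ℕ)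
    (h : (∑ x ∈ s, f x) ^ 2 = s.card * ∑ x ∈ s, f x ^ 2) :
    ∀ p ∈ s, ∀ q ∈ s, f p = f q := by
  have h' : (∑ x ∈ s, ((f x : ℤ))) ^ 2 = (s.card : ℤ) * ∑ x ∈ s, (f x : ℤ) ^ 2 := by
    exact_mod_cast h
  intro p hp q hq
  exact_mod_cast const_of_sq_sum_eq s (fun x => (f x : ℤ)) h' p hp q hq

lemma fin3_cases {p q r : Fin 3} (hpq : p ≠ q) (hpr : p ≠ r) (hqr : q ≠ r) (x : Fin 3) :
    x = p ∨ x = q ∨ x = r := by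
  revert hpq hpr hqr; revert p q r x; decide

lemma prodperm (f : Fin 3 → ℕ) {c₁ c₂ c₃ : Fin 3} (h12 : c₁ ≠ c₂) (h13 : c₁ ≠ c₃)
    (h23 : c₂ ≠ c₃) : f 0 * (f 1 * f 2) = f c₁ * (f c₂ * f c₃) := by
  have h01 : (0 : Fin 3) ≠ 1 := by decide
  have h02 : (0 : Fin 3) ≠ 2 := by decide
  have hx12 : (1 : Fin 3) ≠ 2 := by decide
  rcases fin3_cases h01 h02 hx12 c₁ with e1 | e1 | e1 <;>
    rcases fin3_cases h01 h02 hx12 c₂ with e2 | e2 | e2 <;>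
    rcases fin3_cases h01 h02 hx12 c₃ with e3 | e3 | e3 <;>
    subst e1 <;> subst e2 <;> subst e3 <;>
    first
      | ring1
      | exact absurd rfl h12
      | exact absurd rfl h13
      | exact absurd rfl h23

variable {Γ : SimpleGraph V} {col : Sym2 V → Fin 3}

lemma colsymm (col : Sym2 V → Fin 3) (x y : V) : col s(x, y) = col s(y, x) := by
  rw [Sym2.eq_swap]

lemma colflip {c : Fin 3} {x y : V} (h : col s(x, y) = c) : col s(y, x) = c := by
  rw [Sym2.eq_swap]; exact h

lemma tripleA (x y z : V) : ({y, x, z} : Finset V) = {x, y, z} := by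
  ext w; simp only [Finset.mem_insert, Finset.mem_singleton]; tauto

lemma tripleB (x y z : V) : ({x, z, y} : Finset V) = {x, y, z} := by
  ext w; simp only [Finset.mem_insert, Finset.mem_singleton]; tauto

lemma tripleC (x y z : V) : ({z, x, y} : Finset V) = {x, y, z} := by
  ext w; simp only [Finset.mem_insert, Finset.mem_singleton]; tauto

lemma tripleD (x y z : V) : ({y, z, x} : Finset V) = {x, y, z} := by
  ext w; simp only [Finset.mem_insert, Finset.mem_singleton]; tauto

lemma tripleE (x y z : V) : ({z, y, x} : Finset V) = {x, y, z} := by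
  ext w; simp only [Finset.mem_insert, Finset.mem_singleton]; tauto

/-! ### The basic finsets -/

/-- ordered pairs of vertices forming an edge of color c -/
def op (Γ : SimpleGraph V) (col : Sym2 V → Fin 3) (c : Fin 3) : Finset (V × V) :=
  Finset.univ.filter fun p => Γ.Adj p.1 p.2 ∧ col s(p.1, p.2) = c

def nF (Γ : SimpleGraph V) (col : Sym2 V → Fin 3) (c₂ c₃ : Fin 3) (u v : V) : Finset V :=
  Finset.univ.filter fun w => Γ.Adj u w ∧ col s(u, w) = c₂ ∧ Γ.Adj v w ∧ col s(v, w) = c₃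

def trips (Γ : SimpleGraph V) (col : Sym2 V → Fin 3) (c₁ c₂ c₃ : Fin 3) : Finset (V × V × V) :=
  Finset.univ.filter fun t => Γ.Adj t.1 t.2.1 ∧ col s(t.1, t.2.1) = c₁ ∧
    Γ.Adj t.1 t.2.2 ∧ col s(t.1, t.2.2) = c₂ ∧ Γ.Adj t.2.1 t.2.2 ∧ col s(t.2.1, t.2.2) = c₃

def tup (Γ : SimpleGraph V) (col : Sym2 V → Fin 3) (c₁ c₂ c₃ : Fin 3) :
    Finset (V × V × V × V) :=
  Finset.univ.filter fun t => Γ.Adj t.1 t.2.1 ∧ col s(t.1, t.2.1) = c₁ ∧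
    t.2.2.1 ∈ nF Γ col c₂ c₃ t.1 t.2.1 ∧ t.2.2.2 ∈ nF Γ col c₂ c₃ t.1 t.2.1

def tupmap (t : V × V × V × V) : Sym2 V × Sym2 V := (s(t.1, t.2.2.1), s(t.2.1, t.2.2.2))

lemma mem_op {c : Fin 3} {p : V × V} :
    p ∈ op Γ col c ↔ Γ.Adj p.1 p.2 ∧ col s(p.1, p.2) = c := by simp [op]

lemma mem_nF {c₂ c₃ : Fin 3} {u v w : V} :
    w ∈ nF Γ col c₂ c₃ u v ↔ Γ.Adj u w ∧ col s(u, w) = c₂ ∧ Γ.Adj v w ∧ col s(v, w) = c₃ := by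
  simp [nF]

lemma mem_trips {c₁ c₂ c₃ : Fin 3} {t : V × V × V} :
    t ∈ trips Γ col c₁ c₂ c₃ ↔ Γ.Adj t.1 t.2.1 ∧ col s(t.1, t.2.1) = c₁ ∧
      Γ.Adj t.1 t.2.2 ∧ col s(t.1, t.2.2) = c₂ ∧ Γ.Adj t.2.1 t.2.2 ∧ col s(t.2.1, t.2.2) = c₃ := by
  simp [trips]

lemma mem_tup {c₁ c₂ c₃ : Fin 3} {t : V × V × V × V} :
    t ∈ tup Γ col c₁ c₂ c₃ ↔ Γ.Adj t.1 t.2.1 ∧ col s(t.1, t.2.1) = c₁ ∧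
      t.2.2.1 ∈ nF Γ col c₂ c₃ t.1 t.2.1 ∧ t.2.2.2 ∈ nF Γ col c₂ c₃ t.1 t.2.1 := by
  simp only [tup, Finset.mem_filter, Finset.mem_univ, true_and]

lemma op_swap {c : Fin 3} {u v : V} (h : (u, v) ∈ op Γ col c) : (v, u) ∈ op Γ col c := by
  rw [mem_op] at h ⊢
  exact ⟨h.1.symm, colflip h.2⟩

lemma nF_swap {c₂ c₃ : Fin 3} (u v : V) : nF Γ col c₂ c₃ u v = nF Γ col c₃ c₂ v u := by
  ext w; rw [mem_nF, mem_nF]; tauto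

/-! ### Counting lemmas -/

lemma card_op (c : Fin 3) : (op Γ col c).card = 2 * (colorEdges Γ col c).card := by
  have hmap : ∀ p ∈ op Γ col c, s(p.1, p.2) ∈ colorEdges Γ col c := by
    intro p hp; rw [mem_op] at hp
    exact Finset.mem_filter.mpr ⟨Finset.mem_univ _, Γ.mem_edgeSet.mpr hp.1, hp.2⟩
  rw [Finset.card_eq_sum_card_fiberwise hmap, Finset.sum_congr rfl, Finset.sum_const,
    smul_eq_mul, mul_comm]
  · intro e he
    induction e using Sym2.ind with
    | _ a b =>
      simp only [colorEdges, Finset.mem_filter, SimpleGraph.mem_edgeSet] at he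
      have hab : a ≠ b := he.2.1.ne
      have : (op Γ col c).filter (fun p => s(p.1, p.2) = s(a, b)) = {(a, b), (b, a)} := by
        ext p
        simp only [Finset.mem_filter, mem_op, Finset.mem_insert, Finset.mem_singleton]
        constructor
        · rintro ⟨-, hpe⟩
          rcases Sym2.eq_iff.mp hpe with ⟨h1, h2⟩ | ⟨h1, h2⟩
          · left; exact Prod.ext h1 h2
          · right; exact Prod.ext h1 h2
        · rintro (rfl | rfl)
          · exact ⟨⟨he.2.1, he.2.2⟩, rfl⟩
          · exact ⟨⟨he.2.1.symm, colflip he.2.2⟩, Sym2.eq_swap⟩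
      rw [this, Finset.card_pair (by simp [hab])]

lemma card_trips {c₁ c₂ c₃ : Fin 3} (h12 : c₁ ≠ c₂) (h13 : c₁ ≠ c₃) (h23 : c₂ ≠ c₃) :
    (trips Γ col c₁ c₂ c₃).card = (rainbowTriangles Γ col).card := by
  apply Finset.card_bij (fun t _ => ({t.1, t.2.1, t.2.2} : Finset V))
  · rintro ⟨u, v, w⟩ ht
    rw [mem_trips] at ht
    obtain ⟨huv, hcuv, huw, hcuw, hvw, hcvw⟩ := ht
    refine Finset.mem_filter.mpr ⟨Finset.mem_univ _, u, v, w, rfl, huv, huw, hvw, ?_, ?_, ?_⟩ <;>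
      simp only [hcuv, hcuw, hcvw] <;> assumption
  · rintro ⟨u, v, w⟩ ht ⟨u', v', w'⟩ ht' hset
    rw [mem_trips] at ht ht'
    obtain ⟨huv, hcuv, huw, hcuw, hvw, hcvw⟩ := ht
    obtain ⟨huv', hcuv', huw', hcuw', hvw', hcvw'⟩ := ht'
    simp only at hcuv' hcuw' hcvw' huv' huw' hvw' hcuv hcuw hcvw huv huw hvw hset
    have hmem : ∀ x : V, x ∈ ({u', v', w'} : Finset V) → x = u ∨ x = v ∨ x = w := by
      intro x hx
      rw [← hset] at hx
      simpa only [Finset.mem_insert, Finset.mem_singleton] using hx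
    have hu' : u' = u ∨ u' = v ∨ u' = w := hmem u' (by simp)
    have hv' : v' = u ∨ v' = v ∨ v' = w := hmem v' (by simp)
    have hw' : w' = u ∨ w' = v ∨ w' = w := hmem w' (by simp)
    have hu : u' = u := by
      rcases hu' with h | h | h
      · exact h
      · rcases hv' with h2 | h2 | h2
        · have hw : w' = w := by
            rcases hw' with h3 | h3 | h3
            · exact absurd (h3.trans h2.symm).symm hvw'.ne
            · exact absurd (h3.trans h.symm) huw'.ne'
            · exact h3
          rw [h, hw] at hcuw'
          exact absurd (hcuw'.symm.trans hcvw) h23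
        · exact absurd (h.trans h2.symm) huv'.ne
        · rw [h, h2] at hcuv'
          exact absurd (hcuv'.symm.trans hcvw) h13
      · rcases hv' with h2 | h2 | h2
        · rw [h, h2, colsymm col w u] at hcuv'
          exact absurd (hcuv'.symm.trans hcuw) h12
        · rw [h, h2, colsymm col w v] at hcuv'
          exact absurd (hcuv'.symm.trans hcvw) h13
        · exact absurd (h.trans h2.symm) huv'.ne
    have hv : v' = v := by
      rcases hv' with h2 | h2 | h2
      · exact absurd (h2.trans hu.symm) huv'.ne'
      · exact h2
      · rw [hu, h2] at hcuv'
        exact absurd (hcuv'.symm.trans hcuw) h12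
    have hw : w' = w := by
      rcases hw' with h3 | h3 | h3
      · exact absurd (h3.trans hu.symm) huw'.ne'
      · exact absurd (h3.trans hv.symm) hvw'.ne'
      · exact h3
    simp only [Prod.mk.injEq]
    exact ⟨hu.symm, hv.symm, hw.symm⟩
  · intro s hs
    rw [rainbowTriangles, Finset.mem_filter] at hs
    obtain ⟨-, a, b, c, rfl, hab, hac, hbc, h1, h2, h3⟩ := hs
    have hc1 := fin3_cases h1 h2 h3 c₁
    have hc2 := fin3_cases h1 h2 h3 c₂
    have hc3 := fin3_cases h1 h2 h3 c₃
    rcases hc1 with e1 | e1 | e1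
    · rcases hc2 with e2 | e2 | e2
      · exact absurd (e1.trans e2.symm) h12
      · have e3 : c₃ = col s(b, c) := by
          rcases hc3 with e3 | e3 | e3
          · exact absurd (e1.trans e3.symm) h13
          · exact absurd (e2.trans e3.symm) h23
          · exact e3
        exact ⟨(a, b, c), mem_trips.mpr ⟨hab, e1.symm, hac, e2.symm, hbc, e3.symm⟩, rfl⟩
      · have e3 : c₃ = col s(a, c) := by
          rcases hc3 with e3 | e3 | e3
          · exact absurd (e1.trans e3.symm) h13
          · exact e3
          · exact absurd (e2.trans e3.symm) h23
        refine ⟨(b, a, c), mem_trips.mpr ⟨hab.symm, ?_, hbc, e2.symm, hac, e3.symm⟩, tripleA a b c⟩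
        show col s(b, a) = c₁
        rw [colsymm col b a]; exact e1.symm
    · rcases hc2 with e2 | e2 | e2
      · have e3 : c₃ = col s(b, c) := by
          rcases hc3 with e3 | e3 | e3
          · exact absurd (e2.trans e3.symm) h23
          · exact absurd (e1.trans e3.symm) h13
          · exact e3
        refine ⟨(a, c, b), mem_trips.mpr ⟨hac, e1.symm, hab, e2.symm, hbc.symm, ?_⟩, tripleB a b c⟩
        show col s(c, b) = c₃
        rw [colsymm col c b]; exact e3.symm
      · exact absurd (e1.trans e2.symm) h12
      · have e3 : c₃ = col s(a, b) := by
          rcases hc3 with e3 | e3 | e3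
          · exact e3
          · exact absurd (e1.trans e3.symm) h13
          · exact absurd (e2.trans e3.symm) h23
        refine ⟨(c, a, b), mem_trips.mpr ⟨hac.symm, ?_, hbc.symm, ?_, hab, e3.symm⟩, tripleC a b c⟩
        · show col s(c, a) = c₁
          rw [colsymm col c a]; exact e1.symm
        · show col s(c, b) = c₂
          rw [colsymm col c b]; exact e2.symm
    · rcases hc2 with e2 | e2 | e2
      · have e3 : c₃ = col s(a, c) := by
          rcases hc3 with e3 | e3 | e3
          · exact absurd (e2.trans e3.symm) h23
          · exact e3
          · exact absurd (e1.trans e3.symm) h13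
        refine ⟨(b, c, a), mem_trips.mpr ⟨hbc, e1.symm, hab.symm, ?_, hac.symm, ?_⟩, tripleD a b c⟩
        · show col s(b, a) = c₂
          rw [colsymm col b a]; exact e2.symm
        · show col s(c, a) = c₃
          rw [colsymm col c a]; exact e3.symm
      · have e3 : c₃ = col s(a, b) := by
          rcases hc3 with e3 | e3 | e3
          · exact e3
          · exact absurd (e2.trans e3.symm) h23
          · exact absurd (e1.trans e3.symm) h13
        refine ⟨(c, b, a), mem_trips.mpr ⟨hbc.symm, ?_, hac.symm, ?_, hab.symm, ?_⟩, tripleE a b c⟩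
        · show col s(c, b) = c₁
          rw [colsymm col c b]; exact e1.symm
        · show col s(c, a) = c₂
          rw [colsymm col c a]; exact e2.symm
        · show col s(b, a) = c₃
          rw [colsymm col b a]; exact e3.symm
      · exact absurd (e1.trans e2.symm) h12

lemma card_trips_sum (c₁ c₂ c₃ : Fin 3) :
    (trips Γ col c₁ c₂ c₃).card = ∑ p ∈ op Γ col c₁, (nF Γ col c₂ c₃ p.1 p.2).card := by
  have hmap : ∀ t ∈ trips Γ col c₁ c₂ c₃, (t.1, t.2.1) ∈ op Γ col c₁ := by
    intro t ht; rw [mem_trips] at ht; exact mem_op.mpr ⟨ht.1, ht.2.1⟩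
  rw [Finset.card_eq_sum_card_fiberwise hmap]
  refine Finset.sum_congr rfl (fun p hp => ?_)
  rw [mem_op] at hp
  refine Finset.card_bij' (fun t _ => t.2.2) (fun w _ => (p.1, p.2, w)) ?_ ?_ ?_ ?_
  · intro t ht
    rw [Finset.mem_filter, mem_trips] at ht
    obtain ⟨⟨h1, h2, h3, h4, h5, h6⟩, heq⟩ := ht
    have e1 : t.1 = p.1 := congrArg Prod.fst heq
    have e2 : t.2.1 = p.2 := congrArg Prod.snd heq
    simp only [e1, e2] at h3 h4 h5 h6
    exact mem_nF.mpr ⟨h3, h4, h5, h6⟩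
  · intro w hw
    rw [mem_nF] at hw
    refine Finset.mem_filter.mpr ⟨mem_trips.mpr ⟨hp.1, hp.2, hw.1, hw.2.1, hw.2.2.1, hw.2.2.2⟩, rfl⟩
  · intro t ht
    rw [Finset.mem_filter] at ht
    have e1 : t.1 = p.1 := congrArg Prod.fst ht.2
    have e2 : t.2.1 = p.2 := congrArg Prod.snd ht.2
    exact Prod.ext e1.symm (Prod.ext e2.symm rfl)
  · intro w _; rfl

lemma card_tup_sum (c₁ c₂ c₃ : Fin 3) :
    (tup Γ col c₁ c₂ c₃).card = ∑ p ∈ op Γ col c₁, (nF Γ col c₂ c₃ p.1 p.2).card ^ 2 := by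
  have hmap : ∀ t ∈ tup Γ col c₁ c₂ c₃, (t.1, t.2.1) ∈ op Γ col c₁ := by
    intro t ht; rw [mem_tup] at ht; exact mem_op.mpr ⟨ht.1, ht.2.1⟩
  rw [Finset.card_eq_sum_card_fiberwise hmap]
  refine Finset.sum_congr rfl (fun p hp => ?_)
  rw [mem_op] at hp
  have : ((tup Γ col c₁ c₂ c₃).filter (fun t => (t.1, t.2.1) = p)).card
      = ((nF Γ col c₂ c₃ p.1 p.2) ×ˢ (nF Γ col c₂ c₃ p.1 p.2)).card := by
    refine Finset.card_bij' (fun t _ => (t.2.2.1, t.2.2.2)) (fun w _ => (p.1, p.2, w.1, w.2))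
      ?_ ?_ ?_ ?_
    · intro t ht
      rw [Finset.mem_filter, mem_tup] at ht
      obtain ⟨⟨h1, h2, h3, h4⟩, heq⟩ := ht
      have e1 : t.1 = p.1 := congrArg Prod.fst heq
      have e2 : t.2.1 = p.2 := congrArg Prod.snd heq
      simp only [e1, e2] at h3 h4
      exact Finset.mem_product.mpr ⟨h3, h4⟩
    · intro w hw
      rw [Finset.mem_product] at hw
      exact Finset.mem_filter.mpr ⟨mem_tup.mpr ⟨hp.1, hp.2, hw.1, hw.2⟩, rfl⟩
    · intro t ht
      rw [Finset.mem_filter] at ht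
      have e1 : t.1 = p.1 := congrArg Prod.fst ht.2
      have e2 : t.2.1 = p.2 := congrArg Prod.snd ht.2
      exact Prod.ext e1.symm (Prod.ext e2.symm rfl)
    · intro w _; rfl
  rw [this, Finset.card_product, sq]

lemma tup_maps {c₁ c₂ c₃ : Fin 3} :
    ∀ t ∈ tup Γ col c₁ c₂ c₃, tupmap t ∈ (colorEdges Γ col c₂) ×ˢ (colorEdges Γ col c₃) := by
  intro t ht
  rw [mem_tup] at ht
  obtain ⟨h1, h2, h3, h4⟩ := ht
  rw [mem_nF] at h3 h4
  refine Finset.mem_product.mpr ⟨?_, ?_⟩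
  · exact Finset.mem_filter.mpr ⟨Finset.mem_univ _, Γ.mem_edgeSet.mpr h3.1, h3.2.1⟩
  · exact Finset.mem_filter.mpr ⟨Finset.mem_univ _, Γ.mem_edgeSet.mpr h4.2.2.1, h4.2.2.2⟩

lemma tup_inj {c₁ c₂ c₃ : Fin 3} (h12 : c₁ ≠ c₂) (h13 : c₁ ≠ c₃) (h23 : c₂ ≠ c₃) :
    Set.InjOn tupmap ((tup Γ col c₁ c₂ c₃ : Finset (V × V × V × V)) : Set (V × V × V × V)) := by
  rintro ⟨u, v, x, y⟩ ht ⟨u', v', x', y'⟩ ht' heq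
  rw [Finset.mem_coe, mem_tup] at ht
  rw [Finset.mem_coe, mem_tup] at ht'
  obtain ⟨huv, hcuv, hx, hy⟩ := ht
  obtain ⟨huv', hcuv', hx', hy'⟩ := ht'
  rw [mem_nF] at hx hy hx' hy'
  simp only at huv hcuv hx hy huv' hcuv' hx' hy'
  have e1 : s(u', x') = s(u, x) := (congrArg Prod.fst heq).symm
  have e2 : s(v', y') = s(v, y) := (congrArg Prod.snd heq).symm
  simp only [Prod.mk.injEq]
  rcases Sym2.eq_iff.mp e1 with ⟨eu, ex⟩ | ⟨eu, ex⟩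
  · rcases Sym2.eq_iff.mp e2 with ⟨ev, ey⟩ | ⟨ev, ey⟩
    · exact ⟨eu.symm, ev.symm, ex.symm, ey.symm⟩
    · rw [eu, ev] at hcuv'
      exact absurd (hy.2.1.symm.trans hcuv') h12.symm
  · rcases Sym2.eq_iff.mp e2 with ⟨ev, ey⟩ | ⟨ev, ey⟩
    · rw [eu, ev, colsymm col x v] at hcuv'
      exact absurd (hx.2.2.2.symm.trans hcuv') h13.symm
    · have := hy'.2.1
      rw [eu, ey, colsymm col x v] at this
      exact absurd (hx.2.2.2.symm.trans this) h23.symm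

lemma card_tup_le {c₁ c₂ c₃ : Fin 3} (h12 : c₁ ≠ c₂) (h13 : c₁ ≠ c₃) (h23 : c₂ ≠ c₃) :
    (tup Γ col c₁ c₂ c₃).card ≤ (colorEdges Γ col c₂).card * (colorEdges Γ col c₃).card := by
  have := Finset.card_le_card_of_injOn tupmap
    (tup_maps (Γ := Γ) (col := col) (c₁ := c₁) (c₂ := c₂) (c₃ := c₃)) (tup_inj h12 h13 h23)
  rwa [Finset.card_product] at this

lemma colorEdges_pos (hpos : 0 < (rainbowTriangles Γ col).card) (c : Fin 3) :
    0 < (colorEdges Γ col c).card := by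
  obtain ⟨s, hs⟩ := Finset.card_pos.mp hpos
  rw [rainbowTriangles, Finset.mem_filter] at hs
  obtain ⟨-, a, b, c', -, hab, hac, hbc, h1, h2, h3⟩ := hs
  apply Finset.card_pos.mpr
  rcases fin3_cases h1 h2 h3 c with e | e | e
  · exact ⟨s(a, b), Finset.mem_filter.mpr ⟨Finset.mem_univ _, Γ.mem_edgeSet.mpr hab, e.symm⟩⟩
  · exact ⟨s(a, c'), Finset.mem_filter.mpr ⟨Finset.mem_univ _, Γ.mem_edgeSet.mpr hac, e.symm⟩⟩
  · exact ⟨s(b, c'), Finset.mem_filter.mpr ⟨Finset.mem_univ _, Γ.mem_edgeSet.mpr hbc, e.symm⟩⟩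

/-! ### The master equality lemma -/

lemma master (Γ : SimpleGraph V) (col : Sym2 V → Fin 3) (T : ℕ)
    (hT : T = (rainbowTriangles Γ col).card)
    (hT2 : T ^ 2 = 2 * ((colorEdges Γ col 0).card *
      ((colorEdges Γ col 1).card * (colorEdges Γ col 2).card)))
    (hpos : 0 < (rainbowTriangles Γ col).card)
    (c₁ c₂ c₃ : Fin 3) (h12 : c₁ ≠ c₂) (h13 : c₁ ≠ c₃) (h23 : c₂ ≠ c₃) :
    (∀ p ∈ op Γ col c₁, ∀ q ∈ op Γ col c₁,
      (nF Γ col c₂ c₃ p.1 p.2).card = (nF Γ col c₂ c₃ q.1 q.2).card) ∧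
    (∀ (x a b : V), Γ.Adj a x → col s(a, x) = c₂ → Γ.Adj b x → col s(b, x) = c₃ →
      Γ.Adj a b ∧ col s(a, b) = c₁) := by
  have hprod : T ^ 2 = 2 * ((colorEdges Γ col c₁).card *
      ((colorEdges Γ col c₂).card * (colorEdges Γ col c₃).card)) := by
    rw [hT2, prodperm (fun c => (colorEdges Γ col c).card) h12 h13 h23]
  have hTsum : T = ∑ p ∈ op Γ col c₁, (nF Γ col c₂ c₃ p.1 p.2).card := by
    rw [hT, ← card_trips h12 h13 h23, card_trips_sum]
  have hcard : (op Γ col c₁).card = 2 * (colorEdges Γ col c₁).card := card_op c₁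
  have hcs : T ^ 2 ≤ (op Γ col c₁).card * ∑ p ∈ op Γ col c₁,
      (nF Γ col c₂ c₃ p.1 p.2).card ^ 2 := by
    rw [hTsum]; exact cs_nat _ _
  have htup := card_tup_sum (Γ := Γ) (col := col) c₁ c₂ c₃
  have hle := card_tup_le (Γ := Γ) (col := col) h12 h13 h23
  have hE1 : 0 < (colorEdges Γ col c₁).card := colorEdges_pos hpos c₁
  have key1 : (tup Γ col c₁ c₂ c₃).card
      = (colorEdges Γ col c₂).card * (colorEdges Γ col c₃).card := by
    refine le_antisymm hle ?_
    have h1 : T ^ 2 ≤ 2 * (colorEdges Γ col c₁).card * (tup Γ col c₁ c₂ c₃).card := by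
      calc T ^ 2 ≤ (op Γ col c₁).card * ∑ p ∈ op Γ col c₁,
            (nF Γ col c₂ c₃ p.1 p.2).card ^ 2 := hcs
        _ = 2 * (colorEdges Γ col c₁).card * (tup Γ col c₁ c₂ c₃).card := by
            rw [hcard, htup]
    have h2 : 2 * (colorEdges Γ col c₁).card *
        ((colorEdges Γ col c₂).card * (colorEdges Γ col c₃).card)
        ≤ 2 * (colorEdges Γ col c₁).card * (tup Γ col c₁ c₂ c₃).card := by
      calc 2 * (colorEdges Γ col c₁).card *
          ((colorEdges Γ col c₂).card * (colorEdges Γ col c₃).card)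
          = T ^ 2 := by rw [hprod]; ring
        _ ≤ _ := h1
    exact Nat.le_of_mul_le_mul_left h2 (by omega)
  have key2 : (∑ p ∈ op Γ col c₁, (nF Γ col c₂ c₃ p.1 p.2).card) ^ 2
      = (op Γ col c₁).card * ∑ p ∈ op Γ col c₁, (nF Γ col c₂ c₃ p.1 p.2).card ^ 2 := by
    rw [← hTsum, hcard, ← htup, key1, hprod]; ring
  constructor
  · exact fun p hp q hq =>
      const_nat (op Γ col c₁) (fun p => (nF Γ col c₂ c₃ p.1 p.2).card) key2 p hp q hq
  · intro x a b hax hcax hbx hcbx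
    have himg : (tup Γ col c₁ c₂ c₃).image tupmap
        = (colorEdges Γ col c₂) ×ˢ (colorEdges Γ col c₃) := by
      apply Finset.eq_of_subset_of_card_le
      · intro e he
        obtain ⟨t, ht, rfl⟩ := Finset.mem_image.mp he
        exact tup_maps t ht
      · rw [Finset.card_image_of_injOn (tup_inj h12 h13 h23), key1, Finset.card_product]
    have hmem : (s(a, x), s(b, x)) ∈ (tup Γ col c₁ c₂ c₃).image tupmap := by
      rw [himg]
      refine Finset.mem_product.mpr ⟨?_, ?_⟩
      · exact Finset.mem_filter.mpr ⟨Finset.mem_univ _, Γ.mem_edgeSet.mpr hax, hcax⟩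
      · exact Finset.mem_filter.mpr ⟨Finset.mem_univ _, Γ.mem_edgeSet.mpr hbx, hcbx⟩
    obtain ⟨t, ht, hft⟩ := Finset.mem_image.mp hmem
    obtain ⟨u, v, p', q'⟩ := t
    rw [mem_tup] at ht
    obtain ⟨huv, hcuv, hp, hq⟩ := ht
    rw [mem_nF] at hp hq
    simp only at huv hcuv hp hq
    have e1 : s(u, p') = s(a, x) := congrArg Prod.fst hft
    have e2 : s(v, q') = s(b, x) := congrArg Prod.snd hft
    rcases Sym2.eq_iff.mp e1 with ⟨eu, ep⟩ | ⟨eu, ep⟩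
    · rcases Sym2.eq_iff.mp e2 with ⟨ev, eq'⟩ | ⟨ev, eq'⟩
      · rw [eu, ev] at huv hcuv; exact ⟨huv, hcuv⟩
      · rw [eu, ev] at hcuv
        exact absurd (hcax.symm.trans hcuv) h12.symm
    · rcases Sym2.eq_iff.mp e2 with ⟨ev, eq'⟩ | ⟨ev, eq'⟩
      · rw [eu, ev, Sym2.eq_swap] at hcuv
        exact absurd (hcbx.symm.trans hcuv) h13.symm
      · rw [eu, ev] at huv
        exact absurd huv (Γ.loopless.irrefl x)

end Aux

/-- If a 3-edge-colored graph has exactly `√(2·R·G·B) > 0` rainbow triangles, then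
there is a `d ≥ 1` such that for every permutation `(c₁,c₂,c₃)` of the colors and
every edge `uv` of color `c₁`, there are exactly `d` vertices `w` with `uw` of color
`c₂` and `vw` of color `c₃`. -/
theorem stmt13 (Γ : SimpleGraph V) (col : Sym2 V → Fin 3) (R G B T : ℕ)
    (hR : R = (colorEdges Γ col 0).card)
    (hG : G = (colorEdges Γ col 1).card)
    (hB : B = (colorEdges Γ col 2).card)
    (hT : T = (rainbowTriangles Γ col).card)
    (heq : (T : ℝ) = Real.sqrt (2 * R * G * B))
    (hpos : 0 < T) :
    ∃ d : ℕ, 1 ≤ d ∧ ∀ c₁ c₂ c₃ : Fin 3, c₁ ≠ c₂ → c₁ ≠ c₃ → c₂ ≠ c₃ →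
      ∀ u v : V, Γ.Adj u v → col s(u, v) = c₁ →
        (Finset.univ.filter (fun w => Γ.Adj u w ∧ col s(u, w) = c₂ ∧
          Γ.Adj v w ∧ col s(v, w) = c₃)).card = d := by
  classical
  have hpos' : 0 < (rainbowTriangles Γ col).card := hT ▸ hpos
  have hT2 : T ^ 2 = 2 * ((colorEdges Γ col 0).card *
      ((colorEdges Γ col 1).card * (colorEdges Γ col 2).card)) := by
    have h1 : (T : ℝ) ^ 2 = 2 * R * G * B := by
      rw [heq, Real.sq_sqrt (by positivity)]
    have h2 : ((T ^ 2 : ℕ) : ℝ) = ((2 * (R * (G * B)) : ℕ) : ℝ) := by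
      push_cast
      linarith [h1]
    have h3 : T ^ 2 = 2 * (R * (G * B)) := Nat.cast_injective h2
    rw [h3, hR, hG, hB]
  have key := master Γ col T hT hT2 hpos'
  obtain ⟨s, hs⟩ := Finset.card_pos.mp hpos'
  rw [rainbowTriangles, Finset.mem_filter] at hs
  obtain ⟨-, x, y, z, -, hxy, hxz, hyz, hPQ, hPR, hQR⟩ := hs
  set P := col s(x, y) with hPdef
  set Q := col s(x, z) with hQdef
  set Rc := col s(y, z) with hRdef
  refine ⟨(nF Γ col Q Rc x y).card, ?_, ?_⟩
  · exact Finset.card_pos.mpr ⟨z, mem_nF.mpr ⟨hxz, hQdef.symm, hyz, hRdef.symm⟩⟩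
  · intro c₁ c₂ c₃ h12 h13 h23 u v huv hcuv
    show (nF Γ col c₂ c₃ u v).card = _
    have conP := (key P Q Rc hPQ hPR hQR).1
    have conQ := (key Q Rc P hQR hPQ.symm hPR.symm).1
    have conR := (key Rc Q P hQR.symm hPR.symm hPQ.symm).1
    have starPQR := (key P Q Rc hPQ hPR hQR).2
    have starQRP := (key Q Rc P hQR hPQ.symm hPR.symm).2
    have starRPQ := (key Rc P Q hPR.symm hQR.symm hPQ).2
    have hxyP : (x, y) ∈ op Γ col P := mem_op.mpr ⟨hxy, hPdef.symm⟩
    have hxzQ : (x, z) ∈ op Γ col Q := mem_op.mpr ⟨hxz, hQdef.symm⟩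
    have hyzR : (y, z) ∈ op Γ col Rc := mem_op.mpr ⟨hyz, hRdef.symm⟩
    have huvc : (u, v) ∈ op Γ col c₁ := mem_op.mpr ⟨huv, hcuv⟩
    have hvuc : (v, u) ∈ op Γ col c₁ := op_swap huvc
    have hbase : (nF Γ col Rc Q x y).card = (nF Γ col Q Rc x y).card := by
      rw [nF_swap]
      exact conP (y, x) (op_swap hxyP) (x, y) hxyP
    have hsetQ : nF Γ col Rc P x z = nF Γ col Rc Q x y := by
      ext w
      rw [mem_nF, mem_nF]
      constructor
      · rintro ⟨haxw, hcxw, hazw, hczw⟩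
        have hst := starQRP x w y haxw.symm (colflip hcxw) hxy.symm (colflip hPdef.symm)
        exact ⟨haxw, hcxw, hst.1.symm, colflip hst.2⟩
      · rintro ⟨haxw, hcxw, hayw, hcyw⟩
        have hst := starPQR y w z hayw.symm (colflip hcyw) hyz.symm (colflip hRdef.symm)
        exact ⟨haxw, hcxw, hst.1.symm, colflip hst.2⟩
    have hsetR : nF Γ col Q P y z = nF Γ col Rc Q x y := by
      ext w
      rw [mem_nF, mem_nF]
      constructor
      · rintro ⟨hayw, hcyw, hazw, hczw⟩
        have hst := starRPQ z w x hazw.symm (colflip hczw) hxz hQdef.symm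
        exact ⟨hst.1.symm, colflip hst.2, hayw, hcyw⟩
      · rintro ⟨haxw, hcxw, hayw, hcyw⟩
        have hst := starPQR y w z hayw.symm (colflip hcyw) hyz.symm (colflip hRdef.symm)
        exact ⟨hayw, hcyw, hst.1.symm, colflip hst.2⟩
    rcases fin3_cases hPQ hPR hQR c₁ with e1 | e1 | e1
    · -- c₁ = P
      rw [e1] at huvc hvuc
      rcases fin3_cases hPQ hPR hQR c₂ with e2 | e2 | e2
      · exact absurd (e1.trans e2.symm) h12
      · -- c₂ = Q, so c₃ = Rc
        have e3 : c₃ = Rc := by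
          rcases fin3_cases hPQ hPR hQR c₃ with e3 | e3 | e3
          · exact absurd (e1.trans e3.symm) h13
          · exact absurd (e2.trans e3.symm) h23
          · exact e3
        rw [e2, e3]
        exact conP (u, v) huvc (x, y) hxyP
      · -- c₂ = Rc, so c₃ = Q
        have e3 : c₃ = Q := by
          rcases fin3_cases hPQ hPR hQR c₃ with e3 | e3 | e3
          · exact absurd (e1.trans e3.symm) h13
          · exact e3
          · exact absurd (e2.trans e3.symm) h23
        rw [e2, e3]
        calc (nF Γ col Rc Q u v).card = (nF Γ col Q Rc v u).card := by rw [nF_swap]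
          _ = (nF Γ col Q Rc x y).card := conP (v, u) hvuc (x, y) hxyP
    · -- c₁ = Q
      rw [e1] at huvc hvuc
      rcases fin3_cases hPQ hPR hQR c₂ with e2 | e2 | e2
      · -- c₂ = P, so c₃ = Rc
        have e3 : c₃ = Rc := by
          rcases fin3_cases hPQ hPR hQR c₃ with e3 | e3 | e3
          · exact absurd (e2.trans e3.symm) h23
          · exact absurd (e1.trans e3.symm) h13
          · exact e3
        rw [e2, e3]
        calc (nF Γ col P Rc u v).card = (nF Γ col Rc P v u).card := by rw [nF_swap]
          _ = (nF Γ col Rc P x z).card := conQ (v, u) hvuc (x, z) hxzQ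
          _ = (nF Γ col Rc Q x y).card := by rw [hsetQ]
          _ = (nF Γ col Q Rc x y).card := hbase
      · exact absurd (e1.trans e2.symm) h12
      · -- c₂ = Rc, so c₃ = P
        have e3 : c₃ = P := by
          rcases fin3_cases hPQ hPR hQR c₃ with e3 | e3 | e3
          · exact e3
          · exact absurd (e1.trans e3.symm) h13
          · exact absurd (e2.trans e3.symm) h23
        rw [e2, e3]
        calc (nF Γ col Rc P u v).card = (nF Γ col Rc P x z).card := conQ (u, v) huvc (x, z) hxzQ
          _ = (nF Γ col Rc Q x y).card := by rw [hsetQ]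
          _ = (nF Γ col Q Rc x y).card := hbase
    · -- c₁ = Rc
      rw [e1] at huvc hvuc
      rcases fin3_cases hPQ hPR hQR c₂ with e2 | e2 | e2
      · -- c₂ = P, so c₃ = Q
        have e3 : c₃ = Q := by
          rcases fin3_cases hPQ hPR hQR c₃ with e3 | e3 | e3
          · exact absurd (e2.trans e3.symm) h23
          · exact e3
          · exact absurd (e1.trans e3.symm) h13
        rw [e2, e3]
        calc (nF Γ col P Q u v).card = (nF Γ col Q P v u).card := by rw [nF_swap]
          _ = (nF Γ col Q P y z).card := conR (v, u) hvuc (y, z) hyzR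
          _ = (nF Γ col Rc Q x y).card := by rw [hsetR]
          _ = (nF Γ col Q Rc x y).card := hbase
      · -- c₂ = Q, so c₃ = P
        have e3 : c₃ = P := by
          rcases fin3_cases hPQ hPR hQR c₃ with e3 | e3 | e3
          · exact e3
          · exact absurd (e2.trans e3.symm) h23
          · exact absurd (e1.trans e3.symm) h13
        rw [e2, e3]
        calc (nF Γ col Q P u v).card = (nF Γ col Q P y z).card := conR (u, v) huvc (y, z) hyzR
          _ = (nF Γ col Rc Q x y).card := by rw [hsetR]
          _ = (nF Γ col Q Rc x y).card := hbase
      · exact absurd (e1.trans e2.symm) h12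

end RainbowTri
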